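/- Every C² function u : ℝ → ℝ satisfying the ordinary differential equation u''(x) + exp(2u(x)) = 0 for all x ∈ ℝ is of the form u(x) = -ln((1/|c|)·cosh(c·x + c')) for some real constants c ≠ 0 and c'; i.e., this formula gives the most general solution of the elliptic Liouville equation depending only on x. -/

import Mathlib

open Real

/-- Auxiliary: a solution of `w'' = c² w` is `w 0 · cosh(cx) + (w' 0 / c) · sinh(cx)`. -/
lemma linear_ode_cosh_sinh (c : ℝ) (hc : c ≠ 0) (w p : ℝ → ℝ)
    (hw : ∀ x, HasDerivAt w (p x) x) (hp : ∀ x, HasDerivAt p (c ^ 2 * w x) x) :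
    ∀ x, w x = w 0 * Real.cosh (c * x) + (p 0 / c) * Real.sinh (c * x) := by
  have hch : ∀ x : ℝ, HasDerivAt (fun x => Real.cosh (c * x)) (Real.sinh (c * x) * c) x := by
    intro x
    simpa using ((hasDerivAt_id x).const_mul c).cosh
  have hsh : ∀ x : ℝ, HasDerivAt (fun x => Real.sinh (c * x)) (Real.cosh (c * x) * c) x := by
    intro x
    simpa using ((hasDerivAt_id x).const_mul c).sinh
  have hA : ∀ x, HasDerivAt
      (fun x => w x * Real.cosh (c * x) - (p x / c) * Real.sinh (c * x)) 0 x := by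
    intro x
    have h := ((hw x).mul (hch x)).sub (((hp x).div_const c).mul (hsh x))
    refine h.congr_deriv ?_
    field_simp
    ring
  have hB : ∀ x, HasDerivAt
      (fun x => (p x / c) * Real.cosh (c * x) - w x * Real.sinh (c * x)) 0 x := by
    intro x
    have h := (((hp x).div_const c).mul (hch x)).sub ((hw x).mul (hsh x))
    refine h.congr_deriv ?_
    field_simp
    ring
  have hAc : ∀ x, w x * Real.cosh (c * x) - (p x / c) * Real.sinh (c * x)
      = w 0 * Real.cosh (c * 0) - (p 0 / c) * Real.sinh (c * 0) :=
    fun x => is_const_of_deriv_eq_zero (fun y => (hA y).differentiableAt)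
      (fun y => (hA y).deriv) x 0
  have hBc : ∀ x, (p x / c) * Real.cosh (c * x) - w x * Real.sinh (c * x)
      = (p 0 / c) * Real.cosh (c * 0) - w 0 * Real.sinh (c * 0) :=
    fun x => is_const_of_deriv_eq_zero (fun y => (hB y).differentiableAt)
      (fun y => (hB y).deriv) x 0
  intro x
  have h1 := hAc x
  have h2 := hBc x
  simp only [mul_zero, Real.cosh_zero, Real.sinh_zero] at h1 h2
  have hid := Real.cosh_sq_sub_sinh_sq (c * x)
  linear_combination Real.cosh (c * x) * h1 + Real.sinh (c * x) * h2 - w x * hid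

theorem liouville_ode_general_solution (u : ℝ → ℝ) (hu : ContDiff ℝ 2 u)
    (heq : ∀ x : ℝ, deriv (deriv u) x + Real.exp (2 * u x) = 0) :
    ∃ c c' : ℝ, c ≠ 0 ∧
      ∀ x : ℝ, u x = -Real.log ((1 / |c|) * Real.cosh (c * x + c')) := by
  have hud : Differentiable ℝ u := hu.differentiable (by norm_num)
  have hcd : ContDiff ℝ 1 (deriv u) := by
    have h2 : ContDiff ℝ ((1 : ℕ) + 1) u := by exact_mod_cast hu
    exact (contDiff_succ_iff_deriv.mp h2).2.2
  have hdd : Differentiable ℝ (deriv u) := hcd.differentiable (by norm_num)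
  have hu' : ∀ x, HasDerivAt u (deriv u x) x := fun x => (hud x).hasDerivAt
  have hd' : ∀ x, HasDerivAt (deriv u) (deriv (deriv u) x) x := fun x => (hdd x).hasDerivAt
  -- energy
  set e0 := (deriv u 0) ^ 2 + Real.exp (2 * u 0) with he0def
  have hE : ∀ x, (deriv u x) ^ 2 + Real.exp (2 * u x) = e0 := by
    have hg : ∀ x, HasDerivAt (fun x => (deriv u x) ^ 2 + Real.exp (2 * u x)) 0 x := by
      intro x
      have h1 : HasDerivAt (fun x => (deriv u x) ^ 2)
          (2 * deriv u x * deriv (deriv u) x) x := by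
        exact ((hd' x).pow 2).congr_deriv (by ring)
      have h2 : HasDerivAt (fun x => Real.exp (2 * u x))
          (Real.exp (2 * u x) * (2 * deriv u x)) x := ((hu' x).const_mul 2).exp
      have h := h1.add h2
      have h3 : deriv (deriv u) x = -Real.exp (2 * u x) := by linarith [heq x]
      refine h.congr_deriv ?_
      rw [h3]; ring
    intro x
    exact is_const_of_deriv_eq_zero (fun y => (hg y).differentiableAt)
      (fun y => (hg y).deriv) x 0
  have he0pos : 0 < e0 := by
    have := Real.exp_pos (2 * u 0)
    nlinarith
  set c := Real.sqrt e0 with hcdef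
  have hcpos : 0 < c := Real.sqrt_pos.mpr he0pos
  have hc2 : c ^ 2 = e0 := Real.sq_sqrt he0pos.le
  -- w = exp(-u) satisfies w'' = c² w
  have hw : ∀ x, HasDerivAt (fun x => Real.exp (-u x))
      (-deriv u x * Real.exp (-u x)) x := by
    intro x
    simpa [mul_comm] using ((hu' x).neg).exp
  have hp : ∀ x, HasDerivAt (fun x => -deriv u x * Real.exp (-u x))
      (c ^ 2 * Real.exp (-u x)) x := by
    intro x
    have h := ((hd' x).neg).mul (hw x)
    refine h.congr_deriv ?_
    have h3 : deriv (deriv u) x = -Real.exp (2 * u x) := by linarith [heq x]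
    have h4 := hE x
    rw [h3, hc2, ← h4, Pi.neg_apply]
    ring
  have hform := linear_ode_cosh_sinh c hcpos.ne' (fun x => Real.exp (-u x))
    (fun x => -deriv u x * Real.exp (-u x)) hw hp
  set A := Real.exp (-u 0) with hAdef
  set B := (-deriv u 0 * Real.exp (-u 0)) / c with hBdef
  have hwx : ∀ x, Real.exp (-u x) = A * Real.cosh (c * x) + B * Real.sinh (c * x) := hform
  have hApos : 0 < A := Real.exp_pos _
  have hAB : A ^ 2 - B ^ 2 = 1 / c ^ 2 := by
    have hexp1 : Real.exp (-u 0) ^ 2 * Real.exp (2 * u 0) = 1 := by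
      rw [← Real.exp_nat_mul, ← Real.exp_add]
      norm_num
    have h4 : (deriv u 0) ^ 2 + Real.exp (2 * u 0) = c ^ 2 := by rw [hc2]
    rw [hAdef, hBdef]
    field_simp
    nlinarith [hexp1, h4]
  have h1c : 0 < 1 / c ^ 2 := by positivity
  have hABpos : 0 < A + B := by nlinarith [hAB, h1c, hApos]
  have hABneg : 0 < A - B := by nlinarith [hAB, h1c, hApos]
  set c' := Real.log (c * (A + B)) with hc'def
  have htpos : 0 < c * (A + B) := by positivity
  have hec' : Real.exp c' = c * (A + B) := Real.exp_log htpos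
  have hec'' : Real.exp (-c') = c * (A - B) := by
    have hprod : (c * (A + B)) * (c * (A - B)) = 1 := by
      have : c ^ 2 * (A ^ 2 - B ^ 2) = 1 := by
        rw [hAB]; field_simp
      nlinarith [this]
    rw [Real.exp_neg, hec']
    field_simp
    linarith [hprod]
  have hcosh : Real.cosh c' = c * A := by
    rw [Real.cosh_eq, hec', hec'']; ring
  have hsinh : Real.sinh c' = c * B := by
    rw [Real.sinh_eq, hec', hec'']; ring
  refine ⟨c, c', hcpos.ne', fun x => ?_⟩
  have hkey : (1 / |c|) * Real.cosh (c * x + c') = Real.exp (-u x) := by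
    rw [abs_of_pos hcpos, Real.cosh_add, hcosh, hsinh, hwx x]
    field_simp
  rw [hkey, Real.log_exp, neg_neg]
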